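/- arXiv:1912.11559 — 3 statements merged into one kernel-verified Lean document; each statement's English description precedes it below -/
import Mathlib

section
/- As m → 0⁺ (with ε, γ, ω > 0 fixed), the quantity S_upper(m) = (ε²/(2m²ω⁴)) ∑_{n=0}^∞ 1/(n² + γ²/(4m²ω²))² satisfies S_upper(m) = (mπε²)/(γ³ω) + O(m²); that is, there exist constants C, m₀ > 0 such that |S_upper(m) − mπε²/(γ³ω)| ≤ C m² for all 0 < m < m₀. -/
open Set MeasureTheory Filter Real Topology

private lemma aux_hasDerivAt (a : ℝ) (ha : 0 < a) (x : ℝ) :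
    HasDerivAt (fun x : ℝ => x / (2 * a ^ 2 * (x ^ 2 + a ^ 2)) + Real.arctan (x / a) / (2 * a ^ 3))
      (1 / ((x ^ 2 + a ^ 2) ^ 2)) x := by
  have ha0 : a ≠ 0 := ha.ne'
  have hden : (2 * a ^ 2 * (x ^ 2 + a ^ 2)) ≠ 0 := by positivity
  have h1 : HasDerivAt (fun x : ℝ => x / (2 * a ^ 2 * (x ^ 2 + a ^ 2)))
      ((1 * (2 * a ^ 2 * (x ^ 2 + a ^ 2)) - x * (2 * a ^ 2 * (2 * x ^ 1))) /
        (2 * a ^ 2 * (x ^ 2 + a ^ 2)) ^ 2) x := by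
    exact (hasDerivAt_id x).div (((hasDerivAt_pow 2 x).add_const (a ^ 2)).const_mul (2 * a ^ 2)) hden
  have h2 : HasDerivAt (fun x : ℝ => Real.arctan (x / a) / (2 * a ^ 3))
      ((1 / (1 + (x / a) ^ 2) * (1 / a)) / (2 * a ^ 3)) x := by
    have := (Real.hasDerivAt_arctan (x / a)).comp x ((hasDerivAt_id x).div_const a)
    simpa using this.div_const (2 * a ^ 3)
  refine (h1.add h2).congr_deriv ?_
  have h3 : (1 + (x / a) ^ 2) ≠ 0 := by positivity
  have h4 : x ^ 2 + a ^ 2 ≠ 0 := by positivity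
  field_simp
  ring

private lemma aux_tendsto (a : ℝ) (ha : 0 < a) :
    Tendsto (fun x : ℝ => x / (2 * a ^ 2 * (x ^ 2 + a ^ 2)) + Real.arctan (x / a) / (2 * a ^ 3))
      atTop (𝓝 (Real.pi / (4 * a ^ 3))) := by
  have t1 : Tendsto (fun x : ℝ => x / (2 * a ^ 2 * (x ^ 2 + a ^ 2))) atTop (𝓝 0) := by
    have hb : Tendsto (fun x : ℝ => 2 * a ^ 2 * (x ^ 2 + a ^ 2) / x) atTop atTop := by
      apply tendsto_atTop_mono' atTop (f₁ := fun x : ℝ => 2 * a ^ 2 * x)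
      · filter_upwards [eventually_ge_atTop 1] with x hx
        rw [le_div_iff₀ (by linarith)]
        nlinarith
      · exact Tendsto.const_mul_atTop (by positivity) tendsto_id
    have := hb.inv_tendsto_atTop
    apply this.congr'
    filter_upwards [eventually_gt_atTop 0] with x hx
    simp only [Pi.inv_apply]
    rw [inv_div]
  have t2 : Tendsto (fun x : ℝ => Real.arctan (x / a) / (2 * a ^ 3)) atTop
      (𝓝 (Real.pi / 2 / (2 * a ^ 3))) := by
    have harctan : Tendsto Real.arctan atTop (𝓝 (Real.pi / 2)) :=
      tendsto_nhds_of_tendsto_nhdsWithin Real.tendsto_arctan_atTop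
    have hdiv : Tendsto (fun x : ℝ => x / a) atTop atTop := tendsto_id.atTop_div_const ha
    exact (harctan.comp hdiv).div_const (2 * a ^ 3)
  have := t1.add t2
  have heq : (0 : ℝ) + Real.pi / 2 / (2 * a ^ 3) = Real.pi / (4 * a ^ 3) := by ring
  rwa [heq] at this

private lemma aux_integrable (a : ℝ) (ha : 0 < a) :
    IntegrableOn (fun x : ℝ => 1 / ((x ^ 2 + a ^ 2) ^ 2)) (Ioi (0 : ℝ)) :=
  integrableOn_Ioi_deriv_of_nonneg' (a := (0:ℝ)) (fun x _ => aux_hasDerivAt a ha x)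
    (fun x _ => by positivity) (aux_tendsto a ha)

private lemma aux_integral (a : ℝ) (ha : 0 < a) :
    ∫ x in Ioi (0 : ℝ), 1 / ((x ^ 2 + a ^ 2) ^ 2) = Real.pi / (4 * a ^ 3) := by
  have := integral_Ioi_of_hasDerivAt_of_nonneg' (a := (0:ℝ)) (fun x _ => aux_hasDerivAt a ha x)
    (fun x _ => by positivity) (aux_tendsto a ha)
  rw [this]
  simp

private lemma aux_summable (a : ℝ) (ha : 0 < a) :
    Summable (fun n : ℕ => 1 / (((n : ℝ) ^ 2 + a ^ 2) ^ 2)) := by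
  rw [← summable_nat_add_iff 1]
  have hcomp : Summable (fun n : ℕ => 1 / ((n : ℝ) + 1) ^ 2) := by
    have := (summable_nat_add_iff 1).mpr (Real.summable_one_div_nat_pow.mpr one_lt_two)
    apply this.congr
    intro n
    push_cast
    ring
  apply Summable.of_nonneg_of_le (fun n => by positivity) (fun n => ?_) hcomp
  apply one_div_le_one_div_of_le (by positivity)
  push_cast
  nlinarith [sq_nonneg ((n : ℝ) + 1), sq_nonneg a, Nat.cast_nonneg (α := ℝ) n,
    sq_nonneg (((n : ℝ) + 1) ^ 2 - 1)]

private lemma aux_antitone (a : ℝ) (ha : 0 < a) (N : ℕ) :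
    AntitoneOn (fun x : ℝ => 1 / ((x ^ 2 + a ^ 2) ^ 2)) (Icc (0 : ℝ) (0 + N)) := by
  intro x hx y hy hxy
  apply one_div_le_one_div_of_le (by positivity)
  have h2 : x ^ 2 ≤ y ^ 2 := by nlinarith [hx.1]
  exact pow_le_pow_left₀ (by positivity) (by linarith) 2

private lemma aux_bounds (a : ℝ) (ha : 0 < a) :
    Real.pi / (4 * a ^ 3) ≤ (∑' n : ℕ, 1 / (((n : ℝ) ^ 2 + a ^ 2) ^ 2)) ∧
    (∑' n : ℕ, 1 / (((n : ℝ) ^ 2 + a ^ 2) ^ 2)) ≤ Real.pi / (4 * a ^ 3) + 1 / a ^ 4 := by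
  set f : ℝ → ℝ := fun x => 1 / ((x ^ 2 + a ^ 2) ^ 2) with hf
  have hsum := aux_summable a ha
  have hint := aux_integrable a ha
  have hIoi := aux_integral a ha
  constructor
  · -- lower bound
    have key : ∀ N : ℕ, ∫ x in (0 : ℝ)..(N : ℝ), f x ≤ ∑' n : ℕ, 1 / (((n : ℝ) ^ 2 + a ^ 2) ^ 2) := by
      intro N
      have h1 := (aux_antitone a ha N).integral_le_sum
      simp only [zero_add] at h1
      refine h1.trans ?_
      exact Summable.sum_le_tsum (Finset.range N) (fun i _ => by positivity) hsum
    have hten : Tendsto (fun N : ℕ => ∫ x in (0 : ℝ)..(N : ℝ), f x) atTop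
        (𝓝 (∫ x in Ioi (0 : ℝ), f x)) :=
      intervalIntegral_tendsto_integral_Ioi 0 hint tendsto_natCast_atTop_atTop
    have := le_of_tendsto hten (Eventually.of_forall key)
    rwa [show (∫ x in Ioi (0 : ℝ), f x) = Real.pi / (4 * a ^ 3) from hIoi] at this
  · -- upper bound
    rw [Summable.tsum_eq_zero_add hsum]
    have h0 : 1 / (((0 : ℕ) : ℝ) ^ 2 + a ^ 2) ^ 2 = 1 / a ^ 4 := by
      norm_num; ring_nf
    rw [h0]
    have htail : (∑' n : ℕ, 1 / ((((n : ℕ) + 1 : ℕ) : ℝ) ^ 2 + a ^ 2) ^ 2)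
        ≤ Real.pi / (4 * a ^ 3) := by
      rw [← hIoi]
      apply Real.tsum_le_of_sum_range_le (fun n => by positivity)
      intro N
      have h1 := (aux_antitone a ha N).sum_le_integral
      simp only [zero_add] at h1
      refine le_trans ?_ (h1.trans ?_)
      · apply le_of_eq; congr
      · rw [intervalIntegral.integral_of_le (by positivity)]
        exact setIntegral_mono_set hint (Eventually.of_forall (fun x => by positivity))
          (HasSubset.Subset.eventuallyLE Ioc_subset_Ioi_self)
    linarith

theorem stmt_5 (ε γ ω : ℝ) (hε : 0 < ε) (hγ : 0 < γ) (hω : 0 < ω) :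
    ∃ C m₀ : ℝ, 0 < C ∧ 0 < m₀ ∧ ∀ m : ℝ, 0 < m → m < m₀ →
      |(ε ^ 2 / (2 * m ^ 2 * ω ^ 4)) * (∑' n : ℕ, 1 / ((n : ℝ) ^ 2 + γ ^ 2 / (4 * m ^ 2 * ω ^ 2)) ^ 2)
        - m * Real.pi * ε ^ 2 / (γ ^ 3 * ω)| ≤ C * m ^ 2 := by
  refine ⟨8 * ε ^ 2 / γ ^ 4, 1, by positivity, one_pos, fun m hm hm1 => ?_⟩
  set a : ℝ := γ / (2 * m * ω) with haa
  have ha : 0 < a := by positivity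
  have h1 : γ ^ 2 / (4 * m ^ 2 * ω ^ 2) = a ^ 2 := by
    rw [haa, div_pow]
    congr 1
    ring
  rw [h1]
  set T : ℝ := ∑' n : ℕ, 1 / (((n : ℝ) ^ 2 + a ^ 2) ^ 2) with hT
  have hb := aux_bounds a ha
  set K : ℝ := ε ^ 2 / (2 * m ^ 2 * ω ^ 4) with hK
  have hKpos : 0 < K := by positivity
  have hmain : K * (Real.pi / (4 * a ^ 3)) = m * Real.pi * ε ^ 2 / (γ ^ 3 * ω) := by
    rw [hK, haa]
    field_simp
    ring
  have herr : K * (1 / a ^ 4) = 8 * ε ^ 2 / γ ^ 4 * m ^ 2 := by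
    rw [hK, haa]
    field_simp
    ring
  have hub : K * T ≤ K * (Real.pi / (4 * a ^ 3) + 1 / a ^ 4) :=
    mul_le_mul_of_nonneg_left hb.2 hKpos.le
  have hlb : K * (Real.pi / (4 * a ^ 3)) ≤ K * T :=
    mul_le_mul_of_nonneg_left hb.1 hKpos.le
  rw [abs_le]
  constructor
  · nlinarith [mul_pos (mul_pos hm hm) (div_pos (by positivity : (0:ℝ) < 8 * ε ^ 2) (by positivity : (0:ℝ) < γ ^ 4))]
  · nlinarith
end

section
/- As m → 0⁺, the lower-bound series satisfies (ε²/(2m²ω⁴)) ∑_{n=1}^∞ 1/(n² + γ²/(4m²ω²))² = (mπε²)/(γ³ω) + O(m²), since dropping the n = 0 term changes the sum by (ε²/(2m²ω⁴))·(16m⁴ω⁴/γ⁴) = O(m²). -/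
open Set MeasureTheory Filter Real

lemma hasDerivF (a : ℝ) (ha : 0 < a) (x : ℝ) :
    HasDerivAt (fun x : ℝ => x / (2 * a ^ 2 * (x ^ 2 + a ^ 2)) + Real.arctan (x / a) / (2 * a ^ 3))
      (1 / (x ^ 2 + a ^ 2) ^ 2) x := by
  have hx2 : x ^ 2 + a ^ 2 > 0 := by positivity
  have h1 : HasDerivAt (fun x : ℝ => x / (2 * a ^ 2 * (x ^ 2 + a ^ 2)))
      ((2 * a ^ 2 * (x ^ 2 + a ^ 2) - x * (2 * a ^ 2 * (2 * x))) /
        (2 * a ^ 2 * (x ^ 2 + a ^ 2)) ^ 2) x := by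
    have hb : HasDerivAt (fun x : ℝ => 2 * a ^ 2 * (x ^ 2 + a ^ 2)) (2 * a ^ 2 * (2 * x)) x := by
      have := ((hasDerivAt_pow 2 x).add_const (a ^ 2)).const_mul (2 * a ^ 2)
      simpa using this
    have := (hasDerivAt_id' x).div hb (by positivity); simp at this; exact this
  have h2 : HasDerivAt (fun x : ℝ => Real.arctan (x / a) / (2 * a ^ 3))
      ((1 / (1 + (x / a) ^ 2) * (1 / a)) / (2 * a ^ 3)) x := by
    have := ((Real.hasDerivAt_arctan (x / a)).comp x ((hasDerivAt_id x).div_const a)).div_const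
      (2 * a ^ 3)
    simpa using this
  refine (h1.add h2).congr_deriv ?_
  field_simp
  ring


lemma tendstoF (a : ℝ) (ha : 0 < a) :
    Tendsto (fun x : ℝ => x / (2 * a ^ 2 * (x ^ 2 + a ^ 2)) + Real.arctan (x / a) / (2 * a ^ 3))
      atTop (nhds (Real.pi / (4 * a ^ 3))) := by
  have h1 : Tendsto (fun x : ℝ => x / (2 * a ^ 2 * (x ^ 2 + a ^ 2))) atTop (nhds 0) := by
    have hb : Tendsto (fun x : ℝ => 1 / (2 * a ^ 2) * x⁻¹) atTop (nhds 0) := by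
      have := tendsto_inv_atTop_zero.const_mul (1 / (2 * a ^ 2))
      rwa [mul_zero] at this
    apply squeeze_zero_norm' ?_ hb
    filter_upwards [eventually_ge_atTop 1] with x hx
    have hx0 : (0:ℝ) < x := lt_of_lt_of_le one_pos hx
    rw [Real.norm_eq_abs, abs_of_nonneg (by positivity)]
    calc x / (2 * a ^ 2 * (x ^ 2 + a ^ 2)) ≤ x / (2 * a ^ 2 * x ^ 2) := by
          gcongr
          nlinarith [sq_nonneg a, sq_nonneg x]
      _ = 1 / (2 * a ^ 2) * x⁻¹ := by field_simp
  have h2 : Tendsto (fun x : ℝ => Real.arctan (x / a) / (2 * a ^ 3)) atTop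
      (nhds ((Real.pi / 2) / (2 * a ^ 3))) := by
    apply Tendsto.div_const
    exact (Real.tendsto_arctan_atTop.mono_right nhdsWithin_le_nhds).comp
      (tendsto_id.atTop_div_const ha)
  have heq : Real.pi / (4 * a ^ 3) = 0 + (Real.pi / 2) / (2 * a ^ 3) := by ring
  rw [heq]
  exact h1.add h2

lemma integralF (a : ℝ) (ha : 0 < a) :
    ∫ x in Ioi (0:ℝ), 1 / (x ^ 2 + a ^ 2) ^ 2 = Real.pi / (4 * a ^ 3) := by
  have := integral_Ioi_of_hasDerivAt_of_nonneg' (a := (0:ℝ)) (g' := fun x => 1 / (x ^ 2 + a ^ 2) ^ 2)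
    (fun x _ => hasDerivF a ha x) (fun x _ => by positivity) (tendstoF a ha)
  simpa using this

lemma integrableF (a : ℝ) (ha : 0 < a) :
    IntegrableOn (fun x : ℝ => 1 / (x ^ 2 + a ^ 2) ^ 2) (Ioi 0) := by
  exact integrableOn_Ioi_deriv_of_nonneg' (a := (0:ℝ)) (fun x _ => hasDerivF a ha x)
    (fun x _ => by positivity) (tendstoF a ha)

lemma antitoneG (a : ℝ) (ha : 0 < a) (s : Set ℝ) (hs : s ⊆ Ici 0) :
    AntitoneOn (fun x : ℝ => 1 / (x ^ 2 + a ^ 2) ^ 2) s := by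
  intro x hx y hy hxy
  have hx0 : (0:ℝ) ≤ x := hs hx
  dsimp only
  gcongr

lemma summableG (a : ℝ) (ha : 0 < a) :
    Summable (fun n : ℕ => 1 / (((n : ℝ) + 1) ^ 2 + a ^ 2) ^ 2) := by
  have hg : Summable (fun n : ℕ => 1 / (((n : ℕ) : ℝ) + 1) ^ 4) := by
    have h4 : Summable (fun n : ℕ => 1 / ((n : ℝ)) ^ 4) :=
      Real.summable_one_div_nat_pow.mpr (by norm_num)
    have := (summable_nat_add_iff 1).mpr h4
    simpa using this
  apply Summable.of_nonneg_of_le (fun n => by positivity) (fun n => ?_) hg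
  have h1 : (0:ℝ) < ((n : ℝ) + 1) ^ 4 := by positivity
  rw [div_le_div_iff₀ (by positivity) h1]
  nlinarith [sq_nonneg a, sq_nonneg ((n:ℝ)+1), sq_nonneg (a*((n:ℝ)+1)), pow_pos (show (0:ℝ) < (n:ℝ)+1 by positivity) 4]

lemma tsum_upper (a : ℝ) (ha : 0 < a) :
    ∑' n : ℕ, 1 / (((n : ℝ) + 1) ^ 2 + a ^ 2) ^ 2 ≤ Real.pi / (4 * a ^ 3) := by
  apply Real.tsum_le_of_sum_range_le (fun n => by positivity)
  intro N
  have hanti : AntitoneOn (fun x : ℝ => 1 / (x ^ 2 + a ^ 2) ^ 2) (Icc 0 (0 + (N:ℝ))) :=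
    antitoneG a ha _ (fun x hx => hx.1)
  have h1 := hanti.sum_le_integral
  have h2 : (∫ x in (0:ℝ)..(0 + (N:ℝ)), 1 / (x ^ 2 + a ^ 2) ^ 2) ≤
      ∫ x in Ioi (0:ℝ), 1 / (x ^ 2 + a ^ 2) ^ 2 := by
    rw [intervalIntegral.integral_of_le (by positivity)]
    apply setIntegral_mono_set (integrableF a ha)
    · filter_upwards with x using by positivity
    · exact HasSubset.Subset.eventuallyLE Ioc_subset_Ioi_self
  calc ∑ i ∈ Finset.range N, 1 / (((i : ℝ) + 1) ^ 2 + a ^ 2) ^ 2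
      = ∑ i ∈ Finset.range N, (fun x : ℝ => 1 / (x ^ 2 + a ^ 2) ^ 2) (0 + ((i:ℕ) + 1 : ℕ)) := by
        apply Finset.sum_congr rfl; intro i _; push_cast; ring_nf
    _ ≤ ∫ x in (0:ℝ)..(0 + (N:ℝ)), 1 / (x ^ 2 + a ^ 2) ^ 2 := h1
    _ ≤ ∫ x in Ioi (0:ℝ), 1 / (x ^ 2 + a ^ 2) ^ 2 := h2
    _ = Real.pi / (4 * a ^ 3) := integralF a ha

lemma tsum_lower (a : ℝ) (ha : 0 < a) :
    Real.pi / (4 * a ^ 3) - 1 / a ^ 4 ≤ ∑' n : ℕ, 1 / (((n : ℝ) + 1) ^ 2 + a ^ 2) ^ 2 := by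
  set g : ℝ → ℝ := fun x => 1 / (x ^ 2 + a ^ 2) ^ 2 with hg
  have hint1 : IntegrableOn g (Ioi 1) := (integrableF a ha).mono_set (Ioi_subset_Ioi zero_le_one)
  -- each interval integral is below the tsum
  have hN : ∀ N : ℕ, (∫ x in (1:ℝ)..(1 + (N:ℝ)), g x) ≤
      ∑' n : ℕ, 1 / (((n : ℝ) + 1) ^ 2 + a ^ 2) ^ 2 := by
    intro N
    have hanti : AntitoneOn g (Icc 1 (1 + (N:ℝ))) :=
      antitoneG a ha _ (fun x hx => le_trans zero_le_one hx.1)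
    have h1 := hanti.integral_le_sum
    have h2 : ∑ i ∈ Finset.range N, g (1 + (i:ℕ)) =
        ∑ i ∈ Finset.range N, 1 / (((i : ℝ) + 1) ^ 2 + a ^ 2) ^ 2 := by
      apply Finset.sum_congr rfl; intro i _; simp [hg]; ring_nf
    calc (∫ x in (1:ℝ)..(1 + (N:ℝ)), g x) ≤ ∑ i ∈ Finset.range N, g (1 + (i:ℕ)) := h1
      _ = ∑ i ∈ Finset.range N, 1 / (((i : ℝ) + 1) ^ 2 + a ^ 2) ^ 2 := h2
      _ ≤ ∑' n : ℕ, 1 / (((n : ℝ) + 1) ^ 2 + a ^ 2) ^ 2 :=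
          Summable.sum_le_tsum _ (fun i _ => by positivity) (summableG a ha)
  -- the interval integrals tend to the integral over Ioi 1
  have htend : Tendsto (fun N : ℕ => ∫ x in (1:ℝ)..(1 + (N:ℝ)), g x) atTop
      (nhds (∫ x in Ioi (1:ℝ), g x)) :=
    intervalIntegral_tendsto_integral_Ioi 1 hint1
      (tendsto_atTop_add_const_left _ 1 tendsto_natCast_atTop_atTop)
  have hIoi1 : (∫ x in Ioi (1:ℝ), g x) ≤ ∑' n : ℕ, 1 / (((n : ℝ) + 1) ^ 2 + a ^ 2) ^ 2 :=
    le_of_tendsto htend (Eventually.of_forall hN)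
  -- split the integral
  have hsplit : (∫ x in Ioi (0:ℝ), g x) =
      (∫ x in Ioc (0:ℝ) 1, g x) + ∫ x in Ioi (1:ℝ), g x := by
    rw [← setIntegral_union (Ioc_disjoint_Ioi le_rfl) measurableSet_Ioi
      ((integrableF a ha).mono_set Ioc_subset_Ioi_self) hint1,
      Ioc_union_Ioi_eq_Ioi zero_le_one]
  have hsmall : (∫ x in Ioc (0:ℝ) 1, g x) ≤ 1 / a ^ 4 := by
    calc (∫ x in Ioc (0:ℝ) 1, g x) ≤ ∫ _ in Ioc (0:ℝ) 1, 1 / a ^ 4 := by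
          apply setIntegral_mono_on ((integrableF a ha).mono_set Ioc_subset_Ioi_self)
            (integrableOn_const (by simp)) measurableSet_Ioc
          intro x hx
          have h4 : a ^ 4 ≤ (x ^ 2 + a ^ 2) ^ 2 := by nlinarith [hx.1, sq_nonneg x]
          exact one_div_le_one_div_of_le (by positivity) h4
      _ = 1 / a ^ 4 := by simp
  have := integralF a ha
  rw [hg] at *
  linarith [hIoi1, hsmall, hsplit, this]

theorem stmt_6 (ε γ ω : ℝ) (hε : 0 < ε) (hγ : 0 < γ) (hω : 0 < ω) :
    ∃ C m₀ : ℝ, 0 < C ∧ 0 < m₀ ∧ ∀ m : ℝ, 0 < m → m < m₀ →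
      |(ε ^ 2 / (2 * m ^ 2 * ω ^ 4)) *
          (∑' n : ℕ, 1 / (((n : ℝ) + 1) ^ 2 + γ ^ 2 / (4 * m ^ 2 * ω ^ 2)) ^ 2)
        - m * Real.pi * ε ^ 2 / (γ ^ 3 * ω)| ≤ C * m ^ 2 := by
  refine ⟨8 * ε ^ 2 / γ ^ 4, 1, by positivity, one_pos, fun m hm _ => ?_⟩
  set a : ℝ := γ / (2 * m * ω) with hadef
  have ha : 0 < a := by positivity
  have hrw : γ ^ 2 / (4 * m ^ 2 * ω ^ 2) = a ^ 2 := by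
    rw [hadef]; field_simp; ring
  rw [hrw]
  set S := ∑' n : ℕ, 1 / (((n : ℝ) + 1) ^ 2 + a ^ 2) ^ 2 with hS
  have hup : S ≤ Real.pi / (4 * a ^ 3) := tsum_upper a ha
  have hlo : Real.pi / (4 * a ^ 3) - 1 / a ^ 4 ≤ S := tsum_lower a ha
  set c : ℝ := ε ^ 2 / (2 * m ^ 2 * ω ^ 4) with hc
  have hcpos : 0 < c := by positivity
  have hA : c * (Real.pi / (4 * a ^ 3)) = m * Real.pi * ε ^ 2 / (γ ^ 3 * ω) := by
    rw [hc, hadef]; field_simp; ring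
  have hB : c * (1 / a ^ 4) = 8 * ε ^ 2 / γ ^ 4 * m ^ 2 := by
    rw [hc, hadef]; field_simp; ring
  rw [abs_le]
  constructor
  · nlinarith [mul_le_mul_of_nonneg_left hlo hcpos.le]
  · nlinarith [mul_le_mul_of_nonneg_left hup hcpos.le, mul_pos (mul_pos hcpos one_pos) hm]
end

section
/- (Squeeze conclusion) For ε, γ, ω > 0 fixed and S(m) = 2 ∑_{n=0}^∞ c_n(m) c_{n+1}(m) with c_n(m) = (ε/(2m)) / (n²ω² + γ²/(4m²)), one has S(m) = (mπε²)/(γ³ω) + O(m²) as m → 0⁺; in particular S(m)/m → πε²/(γ³ω). -/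
open Real Filter
noncomputable def Faux (a x : ℝ) : ℝ := x/(2*a^2*(x^2+a^2)) + Real.arctan (x/a)/(2*a^3)

lemma Faux_deriv (a : ℝ) (ha : 0 < a) (x : ℝ) :
    HasDerivAt (Faux a) (((x^2+a^2)^2)⁻¹) x := by
  have hpos : 0 < x^2+a^2 := by positivity
  have h1 : HasDerivAt (fun x : ℝ => x/(2*a^2*(x^2+a^2)))
      ((1*(2*a^2*(x^2+a^2)) - x*(2*a^2*(2*x)))/(2*a^2*(x^2+a^2))^2) x := by
    exact (hasDerivAt_id x).div
      (by simpa using ((((hasDerivAt_id x).pow 2).add_const (a^2)).const_mul (2*a^2)))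
      (by positivity)
  have h2 : HasDerivAt (fun x : ℝ => Real.arctan (x/a)/(2*a^3))
      ((1/(1+(x/a)^2) * (1/a))/(2*a^3)) x := by
    exact ((Real.hasDerivAt_arctan (x/a)).comp x ((hasDerivAt_id x).div_const a)).div_const _
  have := (h1.add h2)
  refine this.congr_deriv ?_
  have ha' : a ≠ 0 := ne_of_gt ha
  field_simp
  ring

lemma f_anti (a : ℝ) (ha : 0 < a) {x y : ℝ} (hx : 0 ≤ x) (hxy : x ≤ y) :
    ((y^2+a^2)^2)⁻¹ ≤ ((x^2+a^2)^2)⁻¹ := by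
  have hy : 0 ≤ y := le_trans hx hxy
  have h1 : x^2+a^2 ≤ y^2+a^2 := by nlinarith
  have : (x^2+a^2)^2 ≤ (y^2+a^2)^2 := by nlinarith [sq_nonneg a]
  exact inv_anti₀ (by positivity) this

lemma step (a : ℝ) (ha : 0 < a) (n : ℕ) :
    ((((n:ℝ)+1)^2+a^2)^2)⁻¹ ≤ Faux a (n+1) - Faux a n ∧
    Faux a (n+1) - Faux a n ≤ (((n:ℝ)^2+a^2)^2)⁻¹ := by
  have hlt : (n:ℝ) < (n:ℝ)+1 := by linarith
  obtain ⟨ξ, hξ, hval⟩ := exists_hasDerivAt_eq_slope (Faux a) (fun x => ((x^2+a^2)^2)⁻¹)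
    hlt (fun x _ => (Faux_deriv a ha x).continuousAt.continuousWithinAt)
    (fun x _ => Faux_deriv a ha x)
  have hξ0 : (0:ℝ) ≤ ξ := le_of_lt (lt_of_le_of_lt n.cast_nonneg hξ.1)
  have hslope : Faux a (n+1) - Faux a n = ((ξ^2+a^2)^2)⁻¹ := by
    rw [hval]; field_simp; ring
  constructor
  · rw [hslope]; exact f_anti a ha hξ0 (le_of_lt hξ.2)
  · rw [hslope]; exact f_anti a ha (n.cast_nonneg) (le_of_lt hξ.1)

lemma Faux_le (a : ℝ) (ha : 0 < a) (x : ℝ) (hx : 0 ≤ x) :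
    Faux a x ≤ Real.pi/(4*a^3) + (4*a^3)⁻¹ := by
  have h1 : x/(2*a^2*(x^2+a^2)) ≤ (4*a^3)⁻¹ := by
    rw [inv_eq_one_div, div_le_div_iff₀ (by positivity) (by positivity)]
    nlinarith [sq_nonneg (x-a), sq_nonneg a, mul_pos ha ha]
  have h2 : Real.arctan (x/a)/(2*a^3) ≤ Real.pi/(4*a^3) := by
    have h := le_of_lt (Real.arctan_lt_pi_div_two (x/a))
    rw [div_le_div_iff₀ (by positivity) (by positivity)]
    nlinarith [pow_pos ha 3]
  unfold Faux; linarith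

lemma Faux_tendsto (a : ℝ) (ha : 0 < a) :
    Tendsto (fun n : ℕ => Faux a n) atTop (nhds (Real.pi/(4*a^3))) := by
  have hx : Tendsto (fun x : ℝ => x + a^2/x) atTop atTop := by
    apply tendsto_atTop_mono' atTop _ tendsto_id
    filter_upwards [eventually_gt_atTop (0:ℝ)] with x hx
    have : 0 ≤ a^2/x := by positivity
    simpa using this
  have h1 : Tendsto (fun x : ℝ => x/(2*a^2*(x^2+a^2))) atTop (nhds 0) := by
    have h := (hx.inv_tendsto_atTop).const_mul ((2*a^2)⁻¹)
    rw [mul_zero] at h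
    apply h.congr'
    filter_upwards [eventually_gt_atTop (0:ℝ)] with x hx0
    have hx' : x ≠ 0 := ne_of_gt hx0
    have ha' : a ≠ 0 := ne_of_gt ha
    simp only [Pi.inv_apply]
    rw [eq_div_iff (by positivity)]
    field_simp
    try exact Or.inl trivial
  have h2 : Tendsto (fun x : ℝ => Real.arctan (x/a)/(2*a^3)) atTop
      (nhds (Real.pi/2/(2*a^3))) := by
    exact ((Real.tendsto_arctan_atTop.mono_right nhdsWithin_le_nhds).comp
      (tendsto_id.atTop_div_const ha)).div_const _
  have h3 := (h1.add h2).comp tendsto_natCast_atTop_atTop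
  have heq : (0:ℝ) + Real.pi/2/(2*a^3) = Real.pi/(4*a^3) := by ring
  rw [heq] at h3
  exact h3

lemma Faux_zero (a : ℝ) : Faux a 0 = 0 := by simp [Faux]

lemma keyQ (a : ℝ) (ha : 0 < a) :
    Summable (fun n : ℕ => ((((n:ℝ))^2+a^2)^2)⁻¹) ∧
    Real.pi/(4*a^3) ≤ (∑' n : ℕ, ((((n:ℝ))^2+a^2)^2)⁻¹) ∧
    (∑' n : ℕ, ((((n:ℝ))^2+a^2)^2)⁻¹) ≤ Real.pi/(4*a^3) + ((a^2)^2)⁻¹ := by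
  set f : ℕ → ℝ := fun n => ((((n:ℝ))^2+a^2)^2)⁻¹ with hf
  have hnonneg : ∀ n, 0 ≤ f n := fun n => by positivity
  have htel : ∀ N : ℕ, ∑ n ∈ Finset.range N, (Faux a (n+1) - Faux a n) = Faux a N := by
    intro N
    have h := Finset.sum_range_sub (fun n : ℕ => Faux a (n:ℝ)) N
    simp only [Nat.cast_add, Nat.cast_one, Nat.cast_zero, Faux_zero, sub_zero] at h
    exact h
  have hup : ∀ N : ℕ, ∑ n ∈ Finset.range N, f (n+1) ≤ Faux a N := by
    intro N
    rw [← htel N]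
    apply Finset.sum_le_sum
    intro n _
    have := (step a ha n).1
    simpa [f] using this
  have hlo : ∀ N : ℕ, Faux a N ≤ ∑ n ∈ Finset.range N, f n := by
    intro N
    rw [← htel N]
    apply Finset.sum_le_sum
    intro n _
    exact (step a ha n).2
  have hmono : Monotone (fun n : ℕ => Faux a n) := by
    apply monotone_nat_of_le_succ
    intro n
    have h1 := (step a ha n).1
    have h2 : (0:ℝ) ≤ ((((n:ℝ)+1)^2+a^2)^2)⁻¹ := by positivity
    push_cast
    linarith
  have hFle : ∀ N : ℕ, Faux a N ≤ Real.pi/(4*a^3) :=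
    fun N => hmono.ge_of_tendsto (Faux_tendsto a ha) N
  have hsummable : Summable f := by
    apply summable_of_sum_range_le hnonneg (c := f 0 + Real.pi/(4*a^3))
    intro N
    calc ∑ n ∈ Finset.range N, f n ≤ ∑ n ∈ Finset.range (N+1), f n := by
          rw [Finset.sum_range_succ]; linarith [hnonneg N]
      _ = ∑ n ∈ Finset.range N, f (n+1) + f 0 := Finset.sum_range_succ' f N
      _ ≤ Faux a N + f 0 := by linarith [hup N]
      _ ≤ f 0 + Real.pi/(4*a^3) := by linarith [hFle N]
  refine ⟨hsummable, ?_, ?_⟩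
  · apply le_of_tendsto (Faux_tendsto a ha)
    filter_upwards with N
    exact le_trans (hlo N) (Summable.sum_le_tsum _ (fun n _ => hnonneg n) hsummable)
  · have hshift : Summable (fun n : ℕ => f (n+1)) := by
      exact (summable_nat_add_iff 1).2 hsummable
    have h1 : (∑' n : ℕ, f (n+1)) ≤ Real.pi/(4*a^3) := by
      apply tsum_le_of_sum_range_le (fun n => hnonneg _)
      intro N; exact le_trans (hup N) (hFle N)
    have h2 : (∑' n : ℕ, f n) = f 0 + ∑' n : ℕ, f (n+1) := Summable.tsum_eq_zero_add hsummable
    have hf0 : f 0 = ((a^2)^2)⁻¹ := by simp [f]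
    rw [h2, hf0]
    linarith

lemma keyT (a : ℝ) (ha : 0 < a) :
    Summable (fun n : ℕ => (((n:ℝ)^2+a^2) * (((n:ℝ)+1)^2+a^2))⁻¹) ∧
    |(∑' n : ℕ, (((n:ℝ)^2+a^2) * (((n:ℝ)+1)^2+a^2))⁻¹) - Real.pi/(4*a^3)| ≤ ((a^2)^2)⁻¹ := by
  obtain ⟨hQ, hQlo, hQup⟩ := keyQ a ha
  set f : ℕ → ℝ := fun n => ((((n:ℝ))^2+a^2)^2)⁻¹ with hf
  set g : ℕ → ℝ := fun n => (((n:ℝ)^2+a^2) * (((n:ℝ)+1)^2+a^2))⁻¹ with hg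
  have hgnonneg : ∀ n, 0 ≤ g n := fun n => by positivity
  have hfg : ∀ n, g n ≤ f n := by
    intro n
    apply inv_anti₀ (by positivity)
    have : (0:ℝ) ≤ (n:ℝ) := n.cast_nonneg
    nlinarith [sq_nonneg a]
  have hgf : ∀ n, f (n+1) ≤ g n := by
    intro n
    have : ((((n:ℝ)+1))^2+a^2)^2 = (((n:ℝ)+1)^2+a^2) * (((n:ℝ)+1)^2+a^2) := sq _
    apply inv_anti₀ (by positivity)
    have h0 : (0:ℝ) ≤ (n:ℝ) := n.cast_nonneg
    push_cast
    nlinarith [sq_nonneg a]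
  have hgsum : Summable g := Summable.of_nonneg_of_le hgnonneg hfg hQ
  have hfs : Summable (fun n : ℕ => f (n+1)) := (summable_nat_add_iff 1).2 hQ
  have hup : (∑' n, g n) ≤ Real.pi/(4*a^3) + ((a^2)^2)⁻¹ :=
    le_trans (Summable.tsum_le_tsum hfg hgsum hQ) hQup
  have hlo : Real.pi/(4*a^3) - ((a^2)^2)⁻¹ ≤ ∑' n, g n := by
    have h1 : (∑' n : ℕ, f (n+1)) ≤ ∑' n, g n := Summable.tsum_le_tsum hgf hfs hgsum
    have h2 : (∑' n : ℕ, f n) = f 0 + ∑' n : ℕ, f (n+1) := Summable.tsum_eq_zero_add hQ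
    have hf0 : f 0 = ((a^2)^2)⁻¹ := by simp [f]
    rw [hf0] at h2
    linarith
  refine ⟨hgsum, ?_⟩
  rw [abs_le]
  constructor <;> linarith


theorem stmt_7 (ε γ ω : ℝ) (hε : 0 < ε) (hγ : 0 < γ) (hω : 0 < ω)
    (c : ℝ → ℕ → ℝ)
    (hc : ∀ m n, c m n = (ε / (2 * m)) / ((n : ℝ) ^ 2 * ω ^ 2 + γ ^ 2 / (4 * m ^ 2)))
    (S : ℝ → ℝ) (hS : ∀ m, S m = 2 * ∑' n : ℕ, c m n * c m (n + 1)) :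
    (∃ C m₀ : ℝ, 0 < C ∧ 0 < m₀ ∧ ∀ m : ℝ, 0 < m → m < m₀ →
        |S m - m * Real.pi * ε ^ 2 / (γ ^ 3 * ω)| ≤ C * m ^ 2) ∧
      Filter.Tendsto (fun m => S m / m) (nhdsWithin 0 (Set.Ioi 0))
        (nhds (Real.pi * ε ^ 2 / (γ ^ 3 * ω))) := by
  have hm' : ∀ m : ℝ, 0 < m → m ≠ 0 := fun m hm => ne_of_gt hm
  have hω' : ω ≠ 0 := ne_of_gt hω
  have hγ' : γ ≠ 0 := ne_of_gt hγ
  have hprod : ∀ m : ℝ, 0 < m → ∀ n : ℕ,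
      c m n * c m (n+1) = (ε/(2*m*ω^2))^2 *
        (((n:ℝ)^2+(γ/(2*m*ω))^2) * (((n:ℝ)+1)^2+(γ/(2*m*ω))^2))⁻¹ := by
    intro m hm n
    rw [hc, hc]
    push_cast
    have hmne := hm' m hm
    have d1 : (0:ℝ) < (n:ℝ)^2*ω^2 + γ^2/(4*m^2) := by positivity
    have d2 : (0:ℝ) < ((n:ℝ)+1)^2*ω^2 + γ^2/(4*m^2) := by positivity
    field_simp
    ring
  have hmain : ∀ m : ℝ, 0 < m →
      |S m - m * Real.pi * ε ^ 2 / (γ ^ 3 * ω)| ≤ (8*ε^2/γ^4) * m^2 := by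
    intro m hm
    have hmne := hm' m hm
    set a := γ/(2*m*ω) with ha_def
    have ha : 0 < a := by positivity
    obtain ⟨hsum, habs⟩ := keyT a ha
    set K := ε/(2*m*ω^2) with hK_def
    have hts : (∑' n : ℕ, c m n * c m (n+1))
        = K^2 * ∑' n : ℕ, (((n:ℝ)^2+a^2) * (((n:ℝ)+1)^2+a^2))⁻¹ := by
      rw [funext (hprod m hm), tsum_mul_left]
    set T := ∑' n : ℕ, (((n:ℝ)^2+a^2) * (((n:ℝ)+1)^2+a^2))⁻¹ with hT_def
    rw [hS, hts]
    have hid : m * Real.pi * ε ^ 2 / (γ ^ 3 * ω) = 2*K^2*(Real.pi/(4*a^3)) := by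
      rw [hK_def, ha_def]
      field_simp
      ring
    have hid2 : (8*ε^2/γ^4)*m^2 = 2*K^2*((a^2)^2)⁻¹ := by
      rw [hK_def, ha_def]
      field_simp
      ring
    rw [hid, hid2, show 2*(K^2*T) - 2*K^2*(Real.pi/(4*a^3))
        = (2*K^2)*(T - Real.pi/(4*a^3)) by ring, abs_mul,
      abs_of_nonneg (by positivity : (0:ℝ) ≤ 2*K^2)]
    exact mul_le_mul_of_nonneg_left habs (by positivity)
  constructor
  · exact ⟨8*ε^2/γ^4, 1, by positivity, one_pos, fun m hm _ => hmain m hm⟩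
  · rw [← tendsto_sub_nhds_zero_iff]
    refine squeeze_zero_norm' (a := fun m => (8*ε^2/γ^4) * m) ?_ ?_
    · filter_upwards [self_mem_nhdsWithin] with m hm
      have hm0 : 0 < m := hm
      have hmne := hm' m hm0
      have h := hmain m hm0
      have heq : S m / m - Real.pi * ε ^ 2 / (γ ^ 3 * ω)
          = (S m - m * Real.pi * ε ^ 2 / (γ ^ 3 * ω)) / m := by
        field_simp
      rw [Real.norm_eq_abs, heq, abs_div, abs_of_pos hm0, div_le_iff₀ hm0]
      calc |S m - m * Real.pi * ε ^ 2 / (γ ^ 3 * ω)| ≤ (8*ε^2/γ^4) * m^2 := h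
        _ = (8*ε^2/γ^4) * m * m := by ring
    · have h : Filter.Tendsto (fun x : ℝ => (8*ε^2/γ^4) * x) (nhds 0)
          (nhds ((8*ε^2/γ^4) * 0)) := (continuous_const.mul continuous_id).tendsto 0
      rw [mul_zero] at h
      exact h.mono_left nhdsWithin_le_nhds
end
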